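/- arXiv:nlin/0212007 — 7 statements merged into one kernel-verified Lean document; each statement's English description precedes it below -/
import Mathlib

section
/- Fix an integer n ≥ 1. Let f : ℂⁿ → ℂⁿ be the ladder vector field, f(x)_i = x_i · Σ_{j=1}^n (i − j + 1) x_j. For all indices 1 ≤ l, m ≤ n, the vector field Y^l_m with components Y^l_m(x)_i = x_m · u(x)^{l−m−1} · (x_i − δ_{i,l} u(x)) (integer power) is a Lie symmetry of the ladder system, i.e. the Lie bracket [f, Y^l_m](x) = 0 for every x ∈ ℂⁿ with u(x) ≠ 0. -/
/-- `u x = ∑ j x_j`. -/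
noncomputable def u (n : ℕ) (x : Fin n → ℂ) : ℂ := ∑ j, x j

/-- The vector fields `Y^l_m`, with components
`Y^l_m(x)_i = x_m * u(x)^(l-m-1) * (x_i - δ_{i,l} u(x))` (integer power). -/
noncomputable def Y (n : ℕ) (l m : Fin n) (x : Fin n → ℂ) : Fin n → ℂ :=
  fun i => x m * u n x ^ ((l : ℤ) - (m : ℤ) - 1) * (x i - if i = l then u n x else 0)

/-- The Lie bracket `[V,W](x) = DW(x)·V(x) - DV(x)·W(x)`. -/
noncomputable def lieBracket (n : ℕ) (V W : (Fin n → ℂ) → Fin n → ℂ)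
    (x : Fin n → ℂ) : Fin n → ℂ :=
  fderiv ℂ W x (V x) - fderiv ℂ V x (W x)

/-- each `Y^l_m` is a Lie symmetry of the ladder system
`f(x)_i = x_i ∑_j (i - j + 1) x_j` on the set where `u(x) ≠ 0`. -/
theorem stmt_0 (n : ℕ) (hn : 1 ≤ n)
    (f : (Fin n → ℂ) → Fin n → ℂ)
    (hf : ∀ x i, f x i = x i * ∑ j : Fin n, (((i : ℤ) - (j : ℤ) + 1 : ℤ) : ℂ) * x j) :
    ∀ l m : Fin n, ∀ x : Fin n → ℂ, u n x ≠ 0 →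
      lieBracket n f (Y n l m) x = 0 := by
  intro l m x hx
  set p : ℤ := (l : ℤ) - (m : ℤ) - 1 with hp
  set uu : ℂ := u n x with huu
  set T : ℂ := uu ^ p with hT
  set s : ℂ := ∑ j : Fin n, (j : ℂ) * x j with hs
  -- the sum functional
  set U : (Fin n → ℂ) →L[ℂ] ℂ := ∑ j, (ContinuousLinearMap.proj j : (Fin n → ℂ) →L[ℂ] ℂ)
    with hUdef
  have hUapp : ∀ y : Fin n → ℂ, U y = ∑ j, y j := by
    intro y; simp [hUdef]
  have hU : HasFDerivAt (fun y : Fin n → ℂ => ∑ j, y j) U x := by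
    have h := U.hasFDerivAt (x := x)
    convert h using 2
    simp [hUdef]
  -- linear functionals for f's components
  set V : Fin n → (Fin n → ℂ) →L[ℂ] ℂ := fun i : Fin n =>
    ∑ j : Fin n, ((((i : ℤ) - (j : ℤ) + 1 : ℤ) : ℂ) • (ContinuousLinearMap.proj j : (Fin n → ℂ) →L[ℂ] ℂ))
    with hVdef
  have hVapp : ∀ i, ∀ y : Fin n → ℂ, V i y = ∑ j : Fin n, (((i : ℤ) - (j : ℤ) + 1 : ℤ) : ℂ) * y j := by
    intro i y; simp [hVdef]
  have hV : ∀ i : Fin n, HasFDerivAt (fun y : Fin n → ℂ => ∑ j : Fin n, (((i : ℤ) - (j : ℤ) + 1 : ℤ) : ℂ) * y j)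
      (V i) x := by
    intro i
    have h := (V i).hasFDerivAt (x := x)
    convert h using 2
    simp [hVdef]
  -- derivative of f
  have hfc : ∀ i : Fin n, HasFDerivAt (fun y : Fin n → ℂ => y i * ∑ j : Fin n, (((i:ℤ)-(j:ℤ)+1:ℤ):ℂ) * y j)
      ((x i) • V i + (∑ j : Fin n, (((i:ℤ)-(j:ℤ)+1:ℤ):ℂ) * x j) • (ContinuousLinearMap.proj i)) x :=
    fun i => (hasFDerivAt_apply i x).mul (hV i)
  have hfd : HasFDerivAt f (ContinuousLinearMap.pi fun i =>
      (x i) • V i + (∑ j : Fin n, (((i:ℤ)-(j:ℤ)+1:ℤ):ℂ) * x j) • (ContinuousLinearMap.proj i)) x := by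
    have hfe : f = fun (y : Fin n → ℂ) (i : Fin n) => y i * ∑ j : Fin n, (((i:ℤ)-(j:ℤ)+1:ℤ):ℂ) * y j := by
      funext y i; exact hf y i
    rw [hfe]
    exact hasFDerivAt_pi.2 hfc
  -- derivative of Y components
  have h2 : HasFDerivAt (fun y : Fin n → ℂ => (∑ j, y j) ^ p)
      (((p : ℂ) * uu ^ (p - 1)) • U) x :=
    by exact (hasDerivAt_zpow p (∑ j, x j) (Or.inl hx)).comp_hasFDerivAt x hU
  have h3 : ∀ i : Fin n, HasFDerivAt
      (fun y : Fin n → ℂ => y i - if i = l then ∑ j, y j else 0)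
      ((ContinuousLinearMap.proj i) - if i = l then U else 0) x := by
    intro i
    split_ifs with hil
    · exact (hasFDerivAt_apply i x).sub hU
    · simpa using (hasFDerivAt_apply (𝕜 := ℂ) i x)
  have hYc : ∀ i : Fin n, HasFDerivAt
      (fun y : Fin n → ℂ => y m * (∑ j, y j) ^ p * (y i - if i = l then ∑ j, y j else 0))
      ((x m * uu ^ p) • ((ContinuousLinearMap.proj i) - if i = l then U else 0)
        + (x i - if i = l then uu else 0) •
          ((x m) • (((p : ℂ) * uu ^ (p - 1)) • U) + (uu ^ p) • (ContinuousLinearMap.proj m))) x := by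
    intro i
    have := ((hasFDerivAt_apply m x).mul h2).mul (h3 i)
    convert this using 2
    all_goals rfl
  have hYd : HasFDerivAt (Y n l m) (ContinuousLinearMap.pi fun i =>
      (x m * uu ^ p) • ((ContinuousLinearMap.proj i) - if i = l then U else 0)
        + (x i - if i = l then uu else 0) •
          ((x m) • (((p : ℂ) * uu ^ (p - 1)) • U) + (uu ^ p) • (ContinuousLinearMap.proj m))) x := by
    have hYe : Y n l m = fun y i => y m * (∑ j, y j) ^ p * (y i - if i = l then ∑ j, y j else 0) := by
      funext y i; rfl
    rw [hYe]
    exact hasFDerivAt_pi.2 hYc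
  -- sum identities
  have huu' : (∑ j : Fin n, x j) = uu := by rw [huu]; rfl
  have hSi : ∀ i : Fin n, (∑ j : Fin n, (((i:ℤ)-(j:ℤ)+1:ℤ):ℂ) * x j) = ((i:ℕ):ℂ) * uu + uu - s := by
    intro i
    have h1 : ∀ j : Fin n, (((i:ℤ)-(j:ℤ)+1:ℤ):ℂ) * x j
        = (((i:ℕ):ℂ) * x j + x j) - ((j:ℕ):ℂ) * x j := by
      intro j; push_cast; ring
    rw [Finset.sum_congr rfl fun j _ => h1 j, Finset.sum_sub_distrib, Finset.sum_add_distrib,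
      ← Finset.mul_sum, huu', ← hs]
  have hUfx : U (f x) = uu ^ 2 := by
    rw [hUapp]
    have h1 : ∀ j : Fin n, f x j = ((j:ℕ):ℂ) * x j * uu + (x j * uu - x j * s) := by
      intro j; rw [hf, hSi]; ring
    rw [Finset.sum_congr rfl fun j _ => h1 j, Finset.sum_add_distrib, Finset.sum_sub_distrib,
      ← Finset.sum_mul, ← Finset.sum_mul, ← Finset.sum_mul, huu', ← hs]
    ring
  have hYxj : ∀ j : Fin n, Y n l m x j
      = x m * T * x j - (if j = l then x m * T * uu else 0) := by
    intro j
    show x m * u n x ^ p * (x j - if j = l then u n x else 0) = _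
    rw [← huu, ← hT]
    split_ifs <;> ring
  have hViY : ∀ i : Fin n, (V i) (Y n l m x)
      = x m * T * ((((i:ℕ):ℂ) * uu + uu - s) - (((i:ℕ):ℂ) - ((l:ℕ):ℂ) + 1) * uu) := by
    intro i
    rw [hVapp]
    have h1 : ∀ j : Fin n, (((i:ℤ)-(j:ℤ)+1:ℤ):ℂ) * Y n l m x j
        = x m * T * ((((i:ℤ)-(j:ℤ)+1:ℤ):ℂ) * x j)
          - (if j = l then (((i:ℤ)-(j:ℤ)+1:ℤ):ℂ) * (x m * T * uu) else 0) := by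
      intro j; rw [hYxj]; split_ifs <;> ring
    rw [Finset.sum_congr rfl fun j _ => h1 j, Finset.sum_sub_distrib, ← Finset.mul_sum, hSi,
      Finset.sum_ite_eq' Finset.univ l, if_pos (Finset.mem_univ l)]
    push_cast
    ring
  have hT1 : uu ^ (p - 1) = T * uu⁻¹ := by rw [hT, zpow_sub_one₀ hx]
  have hpc : (p : ℂ) = ((l:ℕ):ℂ) - ((m:ℕ):ℂ) - 1 := by rw [hp]; push_cast; ring
  -- now compute
  funext i
  by_cases hil : i = l
  · subst hil
    simp only [lieBracket, hfd.fderiv, hYd.fderiv, Pi.sub_apply, Pi.zero_apply,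
      ContinuousLinearMap.pi_apply, ContinuousLinearMap.add_apply, ContinuousLinearMap.smul_apply,
      ContinuousLinearMap.sub_apply, ContinuousLinearMap.proj_apply, smul_eq_mul, if_pos rfl, ite_true]
    rw [hUfx, hViY, hYxj, if_pos rfl, hf x i, hf x m, hSi, hSi, hT1, ← hT, hpc]
    field_simp
    try rw [hUfx]
    ring
  · simp only [lieBracket, hfd.fderiv, hYd.fderiv, Pi.sub_apply, Pi.zero_apply,
      ContinuousLinearMap.pi_apply, ContinuousLinearMap.add_apply, ContinuousLinearMap.smul_apply,
      ContinuousLinearMap.sub_apply, ContinuousLinearMap.proj_apply, smul_eq_mul, if_neg hil, ContinuousLinearMap.zero_apply]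
    rw [hUfx, hViY, hYxj, if_neg hil, hf x i, hf x m, hSi, hSi, hT1, ← hT, hpc]
    field_simp
    try rw [hUfx]
    ring
end

section
/- Fix an integer n ≥ 1. Let a : {1,…,n} × {1,…,n} → ℂ be coefficients such that Σ_{l,m=1}^n a(l,m) · Y^l_m(x) = 0 for every x ∈ ℂⁿ with u(x) ≠ 0. Then a(l,m) = 0 whenever l ≠ m, and all diagonal coefficients are equal: a(1,1) = a(2,2) = … = a(n,n). Consequently (combined with the identity Σ_{l=1}^n Y^l_l = 0), the complex linear span of the vector fields { Y^l_m : 1 ≤ l, m ≤ n } on { x : u(x) ≠ 0 } has dimension n² − 1. -/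
open Polynomial in
lemma key {n : ℕ} (a : Fin n → Fin n → ℂ)
    (h : ∀ x : Fin n → ℂ, u n x ≠ 0 → ∑ l : Fin n, ∑ m : Fin n, a l m • Y n l m x = 0)
    (x : Fin n → ℂ) (hx : u n x ≠ 0) (i : Fin n) (d : ℤ) (hd : 0 ≤ d + n + 1) :
    ∑ l : Fin n, ∑ m : Fin n,
      (if (l : ℤ) - (m : ℤ) = d then a l m * Y n l m x i else 0) = 0 := by
  set P : Polynomial ℂ := ∑ l : Fin n, ∑ m : Fin n,
      C (a l m * Y n l m x i) * X ^ ((l : ℤ) - m + 1 + n).toNat with hP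
  have heval : ∀ t : ℂ, t ≠ 0 → P.eval t = 0 := by
    intro t ht
    have hu : u n (t • x) = t * u n x := by
      simp [u, Finset.mul_sum]
    have hux : u n (t • x) ≠ 0 := by rw [hu]; exact mul_ne_zero ht hx
    have h0 := congrFun (h (t • x) hux) i
    simp only [Finset.sum_apply, Pi.smul_apply, Pi.zero_apply, smul_eq_mul] at h0
    have hY : ∀ l m : Fin n, Y n l m (t • x) i = t ^ ((l : ℤ) - m + 1) * Y n l m x i := by
      intro l m
      simp only [Y, hu, Pi.smul_apply, smul_eq_mul, mul_zpow,
        show (l : ℤ) - (m : ℤ) + 1 = ((l : ℤ) - m - 1) + 1 + 1 from by ring,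
        zpow_add₀ ht, zpow_one]
      split_ifs <;> ring
    have hexp : ∀ l m : Fin n, (t : ℂ) ^ ((l : ℤ) - m + 1 + n).toNat
        = t ^ ((l : ℤ) - m + 1) * t ^ (n : ℕ) := by
      intro l m
      have hm : (m : ℤ) < n := by exact_mod_cast m.isLt
      have hl : (0 : ℤ) ≤ (l : ℤ) := Int.natCast_nonneg _
      rw [← zpow_natCast t, Int.toNat_of_nonneg (by omega),
        show (l : ℤ) - m + 1 + n = ((l : ℤ) - m + 1) + (n : ℤ) from by ring,
        zpow_add₀ ht, zpow_natCast]
    calc P.eval t = ∑ l : Fin n, ∑ m : Fin n, a l m * Y n l m (t • x) i * t ^ (n : ℕ) := by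
          rw [hP]
          simp only [eval_finset_sum, eval_mul, eval_C, eval_pow, eval_X]
          exact Finset.sum_congr rfl fun l _ => Finset.sum_congr rfl fun m _ => by
            rw [hexp, hY]; ring
      _ = (∑ l : Fin n, ∑ m : Fin n, a l m * Y n l m (t • x) i) * t ^ (n : ℕ) := by
          simp only [Finset.sum_mul]
      _ = 0 := by rw [h0, zero_mul]
  have hP0 : P = 0 := by
    apply P.eq_zero_of_infinite_isRoot
    apply Set.Infinite.mono (s := {(0 : ℂ)}ᶜ)
    · intro t ht
      exact heval t ht
    · exact Set.Finite.infinite_compl (Set.finite_singleton 0)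
  have hcoeff : P.coeff (d + n + 1).toNat = 0 := by rw [hP0]; simp
  have hgoal : ∑ l : Fin n, ∑ m : Fin n,
      (if (l : ℤ) - (m : ℤ) = d then a l m * Y n l m x i else 0)
      = P.coeff (d + n + 1).toNat := by
    rw [hP]
    simp only [finset_sum_coeff, coeff_C_mul, coeff_X_pow, mul_ite, mul_one, mul_zero]
    refine Finset.sum_congr rfl fun l _ => Finset.sum_congr rfl fun m _ => ?_
    refine if_congr ?_ rfl rfl
    have hm : (m : ℤ) < n := by exact_mod_cast m.isLt
    have hl : (0 : ℤ) ≤ (l : ℤ) := Int.natCast_nonneg _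
    omega
  rw [hgoal, hcoeff]

lemma offdiag {n : ℕ} (a : Fin n → Fin n → ℂ)
    (h : ∀ x : Fin n → ℂ, u n x ≠ 0 → ∑ l : Fin n, ∑ m : Fin n, a l m • Y n l m x = 0)
    (l₀ m₀ : Fin n) (hne : l₀ ≠ m₀) : a l₀ m₀ = 0 := by
  set x : Fin n → ℂ := fun j => if j = m₀ then 1 else 0 with hxdef
  have hu1 : u n x = 1 := by simp [u, hxdef]
  have hm0 : (m₀ : ℤ) < n := by exact_mod_cast m₀.isLt
  have hl0 : (0 : ℤ) ≤ (l₀ : ℤ) := Int.natCast_nonneg _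
  have hk := key a h x (by rw [hu1]; exact one_ne_zero) m₀ ((l₀ : ℤ) - m₀) (by omega)
  rw [Finset.sum_eq_single l₀] at hk
  · rw [Finset.sum_eq_single m₀] at hk
    · rw [if_pos rfl] at hk
      have hY : Y n l₀ m₀ x m₀ = 1 := by
        simp only [Y, hu1]
        simp [hxdef, Ne.symm hne]
      rw [hY, mul_one] at hk
      exact hk
    · intro m _ hm
      rw [if_neg]
      intro hc
      exact hm (Fin.ext (by omega))
    · intro hc; exact absurd (Finset.mem_univ _) hc
  · intro l _ hl
    apply Finset.sum_eq_zero
    intro m _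
    split_ifs with hc
    · have hm : m ≠ m₀ := by
        intro he; subst he; exact hl (Fin.ext (by omega))
      simp [Y, hxdef, hm]
    · rfl
  · intro hc; exact absurd (Finset.mem_univ _) hc

lemma diageq {n : ℕ} (a : Fin n → Fin n → ℂ)
    (h : ∀ x : Fin n → ℂ, u n x ≠ 0 → ∑ l : Fin n, ∑ m : Fin n, a l m • Y n l m x = 0)
    (j k : Fin n) : a j j = a k k := by
  rcases eq_or_ne j k with rfl | hne
  · rfl
  set x : Fin n → ℂ := fun t => (if t = j then 1 else 0) + (if t = k then 1 else 0) with hxdef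
  have hu2 : u n x = 2 := by
    simp [u, hxdef, Finset.sum_add_distrib]
    norm_num
  have hk := key a h x (by rw [hu2]; exact two_ne_zero) j 0 (by positivity)
  have hstep : ∀ l' : Fin n, (∑ m' : Fin n,
      if (l' : ℤ) - (m' : ℤ) = 0 then a l' m' * Y n l' m' x j else 0)
      = a l' l' * Y n l' l' x j := by
    intro l'
    rw [Finset.sum_eq_single l']
    · rw [if_pos (by ring)]
    · intro m' _ hm'
      rw [if_neg]
      intro hc
      exact hm' (Fin.ext (by omega))
    · intro hc; exact absurd (Finset.mem_univ _) hc
  rw [Finset.sum_congr rfl fun l' _ => hstep l'] at hk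
  have hvanish : ∀ l' ∈ Finset.univ, l' ∉ ({j, k} : Finset (Fin n)) →
      a l' l' * Y n l' l' x j = 0 := by
    intro l' _ hl'
    simp only [Finset.mem_insert, Finset.mem_singleton, not_or] at hl'
    simp [Y, hxdef, hl'.1, hl'.2]
  rw [← Finset.sum_subset (Finset.subset_univ ({j, k} : Finset (Fin n))) hvanish,
    Finset.sum_pair hne] at hk
  have hYj : Y n j j x j = 2 ^ (-1 : ℤ) * (1 - 2) := by
    have he : (j : ℤ) - (j : ℤ) - 1 = -1 := by ring
    simp only [Y, hu2]
    simp [hxdef, hne, he]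
  have hYk : Y n k k x j = 2 ^ (-1 : ℤ) * 1 := by
    have he : (k : ℤ) - (k : ℤ) - 1 = -1 := by ring
    simp only [Y, hu2]
    simp [hxdef, hne, Ne.symm hne, he]
  rw [hYj, hYk] at hk
  have h2 : (2 : ℂ) ^ (-1 : ℤ) = 2⁻¹ := by norm_num
  rw [h2] at hk
  have h2ne : (2 : ℂ) ≠ 0 := two_ne_zero
  field_simp at hk
  linear_combination -hk

lemma sumYdiag {n : ℕ} (x : Fin n → ℂ) (hx : u n x ≠ 0) (i : Fin n) :
    ∑ l : Fin n, Y n l l x i = 0 := by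
  have hterm : ∀ l : Fin n, Y n l l x i
      = x l * (u n x)⁻¹ * x i - (if i = l then x l * (u n x)⁻¹ * u n x else 0) := by
    intro l
    simp only [Y, show (l : ℤ) - (l : ℤ) - 1 = -1 from by ring, zpow_neg_one]
    split_ifs <;> ring
  rw [Finset.sum_congr rfl fun l _ => hterm l, Finset.sum_sub_distrib]
  have h1 : ∑ l : Fin n, x l * (u n x)⁻¹ * x i = u n x * (u n x)⁻¹ * x i := by
    rw [show u n x * (u n x)⁻¹ * x i = (∑ l : Fin n, x l) * (u n x)⁻¹ * x i from rfl]
    rw [Finset.sum_mul, Finset.sum_mul]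
  have h2 : (∑ l : Fin n, if i = l then x l * (u n x)⁻¹ * u n x else 0)
      = x i * (u n x)⁻¹ * u n x := by
    rw [Finset.sum_ite_eq]
    simp
  rw [h1, h2]
  field_simp
  ring

/-- the only linear relations among the `Y^l_m` (on `{u ≠ 0}`) are that the
off-diagonal coefficients vanish and the diagonal coefficients are all equal; consequently
the span of the `Y^l_m`, as vector fields on `{x : u(x) ≠ 0}`, has dimension `n² - 1`. -/
theorem stmt_5 (n : ℕ) (hn : 1 ≤ n) :
    (∀ a : Fin n → Fin n → ℂ,
      (∀ x : Fin n → ℂ, u n x ≠ 0 → ∑ l : Fin n, ∑ m : Fin n, a l m • Y n l m x = 0) →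
      (∀ l m : Fin n, l ≠ m → a l m = 0) ∧ (∀ l m : Fin n, a l l = a m m)) ∧
    Module.finrank ℂ (Submodule.span ℂ (Set.range fun p : Fin n × Fin n =>
      fun x : {x : Fin n → ℂ // u n x ≠ 0} => Y n p.1 p.2 x.1)) = n ^ 2 - 1 := by
  constructor
  · intro a ha
    exact ⟨fun l m hlm => offdiag a ha l m hlm, fun l m => diageq a ha l m⟩
  · set v : Fin n × Fin n → ({x : Fin n → ℂ // u n x ≠ 0} → Fin n → ℂ) :=
      fun p => fun x => Y n p.1 p.2 x.1 with hv
    set φ := Fintype.linearCombination ℂ v with hφ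
    have hrange : Submodule.span ℂ (Set.range v) = LinearMap.range φ :=
      (Fintype.range_linearCombination ℂ v).symm
    set δ : Fin n × Fin n → ℂ := fun p => if p.1 = p.2 then 1 else 0 with hδ
    have z : Fin n := ⟨0, hn⟩
    have hδmem : δ ∈ LinearMap.ker φ := by
      rw [LinearMap.mem_ker, hφ, Fintype.linearCombination_apply]
      have : ∑ p : Fin n × Fin n, δ p • v p = ∑ l : Fin n, v (l, l) := by
        rw [Fintype.sum_prod_type]
        refine Finset.sum_congr rfl fun l _ => ?_
        rw [Finset.sum_eq_single l]
        · simp [hδ]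
        · intro m _ hm
          simp [hδ, Ne.symm hm]
        · intro hc; exact absurd (Finset.mem_univ _) hc
      rw [this]
      funext x
      funext i
      have := sumYdiag x.1 x.2 i
      simpa [hv] using this
    have hδne : δ ≠ 0 := by
      intro h0
      have := congrFun h0 (z, z)
      simp [hδ] at this
    have hker : LinearMap.ker φ = Submodule.span ℂ {δ} := by
      apply le_antisymm
      · intro b hb
        rw [LinearMap.mem_ker, hφ, Fintype.linearCombination_apply] at hb
        have hrel : ∀ x : Fin n → ℂ, u n x ≠ 0 →
            ∑ l : Fin n, ∑ m : Fin n, b (l, m) • Y n l m x = 0 := by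
          intro x hx
          have h1 := congrFun hb ⟨x, hx⟩
          rw [Fintype.sum_prod_type] at h1
          simpa [hv] using h1
        have hoff := fun l m hlm => offdiag (fun l m => b (l, m)) hrel l m hlm
        have hdg := fun l m => diageq (fun l m => b (l, m)) hrel l m
        rw [Submodule.mem_span_singleton]
        refine ⟨b (z, z), ?_⟩
        funext p
        rcases p with ⟨l, m⟩
        rcases eq_or_ne l m with rfl | hlm
        · simp [hδ, hdg l z]
        · simp [hδ, hlm, hoff l m hlm]
      · rw [Submodule.span_singleton_le_iff_mem]
        exact hδmem
    have hrn := LinearMap.finrank_range_add_finrank_ker φ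
    have hdom : Module.finrank ℂ (Fin n × Fin n → ℂ) = n * n := by
      rw [Module.finrank_pi]
      simp
    have hkerrank : Module.finrank ℂ (LinearMap.ker φ) = 1 := by
      rw [hker]
      exact finrank_span_singleton hδne
    rw [hrange]
    have hsq : n ^ 2 = n * n := sq n
    omega
end

section
/- Fix an integer n ≥ 1 and an integer k with −n < k < n and k ≠ 0. If complex coefficients α_l (for l ranging over those indices with 1 ≤ l ≤ n and 1 ≤ l − k ≤ n) satisfy Σ_l α_l · Y^l_{l−k}(x) = 0 for every x ∈ ℂⁿ with u(x) ≠ 0, then α_l = 0 for all such l. That is, for each fixed nonzero off-diagonal index k, the family { Y^l_{l−k} } is linearly independent over ℂ. -/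
/-- for each fixed nonzero `k` with `-n < k < n`, the family `{Y^l_{l-k}}`
(over those `l` for which `l - k` is also a valid index) is linearly independent over `ℂ`:
any linear combination that vanishes on `{u ≠ 0}` has all its coefficients zero. -/
theorem stmt_6 (n : ℕ) (hn : 1 ≤ n) (k : ℤ) (hk₁ : -(n : ℤ) < k) (hk₂ : k < n) (hk₀ : k ≠ 0)
    (α : Fin n → ℂ)
    (hsum : ∀ x : Fin n → ℂ, u n x ≠ 0 →
      (∑ l : Fin n, if h : 0 ≤ (l : ℤ) - k ∧ (l : ℤ) - k < n then
          α l • Y n l ⟨((l : ℤ) - k).toNat, by omega⟩ x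
        else 0) = 0) :
    ∀ l : Fin n, 0 ≤ (l : ℤ) - k → (l : ℤ) - k < n → α l = 0 := by
  intro l hl1 hl2
  have hmlt : ((l : ℤ) - k).toNat < n := by omega
  set x : Fin n → ℂ := fun j => if j = ⟨((l : ℤ) - k).toNat, hmlt⟩ then 1 else 0 with hx
  have hu : u n x = 1 := by simp [u, hx]
  have h := hsum x (by rw [hu]; exact one_ne_zero)
  have h2 := congrFun h l
  rw [Finset.sum_apply] at h2
  rw [Finset.sum_eq_single l] at h2
  · rw [dif_pos ⟨hl1, hl2⟩] at h2
    have hlm : l ≠ (⟨((l : ℤ) - k).toNat, hmlt⟩ : Fin n) := by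
      intro hc
      apply hk₀
      have := congrArg Fin.val hc
      simp at this
      omega
    simp only [Pi.smul_apply, Y, hu, one_zpow, Pi.zero_apply] at h2
    rw [hx] at h2
    simp only [if_pos rfl, if_neg hlm] at h2
    simpa using h2
  · intro b _ hbl
    by_cases hb : 0 ≤ (b : ℤ) - k ∧ (b : ℤ) - k < n
    · rw [dif_pos hb]
      have hbv : (b : ℤ) ≠ (l : ℤ) := by
        intro hc
        exact hbl (Fin.ext (by exact_mod_cast hc))
      have hne : ((b : ℤ) - k).toNat ≠ ((l : ℤ) - k).toNat := by omega
      simp only [Pi.smul_apply, Y, hx]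
      rw [if_neg (by simp [Fin.ext_iff]; omega)]
      simp
    · rw [dif_neg hb]; rfl
  · intro h; exact absurd (Finset.mem_univ l) h
end

section
/- Fix an integer n ≥ 1. The vector fields Y^n_1, …, Y^n_{n−1} have polynomial components, namely Y^n_m(x)_i = x_m · u(x)^{n−m−1} · (x_i − δ_{i,n} u(x)) with n − m − 1 ≥ 0 for 1 ≤ m ≤ n−1, and they pairwise commute: [Y^n_m, Y^n_{m'}](x) = 0 for all 1 ≤ m, m' ≤ n−1 and all x ∈ ℂⁿ. Hence they span an (n−1)-dimensional Abelian Lie algebra of polynomial Lie symmetries of the ladder system. -/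

noncomputable def Lproj (n : ℕ) (i : Fin n) : (Fin n → ℂ) →L[ℂ] ℂ := ContinuousLinearMap.proj i

@[simp] lemma Lproj_apply (n : ℕ) (i : Fin n) (v : Fin n → ℂ) : Lproj n i v = v i := rfl

lemma hasFDerivAt_Lproj (n : ℕ) (i : Fin n) (x : Fin n → ℂ) :
    HasFDerivAt (fun x : Fin n → ℂ => x i) (Lproj n i) x := (Lproj n i).hasFDerivAt

/-- linear map v ↦ ∑ v j -/
noncomputable def Lsum (n : ℕ) : (Fin n → ℂ) →L[ℂ] ℂ := ∑ j, Lproj n j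

@[simp] lemma Lsum_apply (n : ℕ) (v : Fin n → ℂ) : Lsum n v = ∑ j, v j := by
  simp [Lsum]

lemma hasFDerivAt_u (n : ℕ) (x : Fin n → ℂ) : HasFDerivAt (u n) (Lsum n) x := by
  have : HasFDerivAt (fun x : Fin n → ℂ => ∑ j, x j)
      (∑ j : Fin n, Lproj n j) x :=
    HasFDerivAt.fun_sum (fun j _ => hasFDerivAt_Lproj n j x)
  exact this

lemma hasFDerivAt_upow (n a : ℕ) (x : Fin n → ℂ) :
    HasFDerivAt (fun x => u n x ^ a) (((a : ℂ) * u n x ^ (a - 1)) • Lsum n) x :=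
  (hasDerivAt_pow a (u n x)).comp_hasFDerivAt x (hasFDerivAt_u n x)

/-- polynomial component form -/
noncomputable def comp (n : ℕ) (m i : Fin n) (a : ℕ) (d : ℂ) : (Fin n → ℂ) → ℂ :=
  fun x => x m * u n x ^ a * (x i - d * u n x)

lemma hasFDerivAt_comp (n : ℕ) (m i : Fin n) (a : ℕ) (d : ℂ) (x : Fin n → ℂ) :
    HasFDerivAt (comp n m i a d)
      ((u n x ^ a * (x i - d * u n x)) • Lproj n m
        + (x m * (x i - d * u n x)) • (((a : ℂ) * u n x ^ (a - 1)) • Lsum n)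
        + (x m * u n x ^ a) • (Lproj n i - d • Lsum n)) x := by
  have h1 := hasFDerivAt_Lproj n m x
  have h2 := hasFDerivAt_upow n a x
  have h3 : HasFDerivAt (fun x : Fin n → ℂ => x i - d * u n x)
      (Lproj n i - d • Lsum n) x :=
    (hasFDerivAt_Lproj n i x).sub ((hasFDerivAt_u n x).const_mul d)
  have h := (h1.mul h2).mul h3
  refine h.congr_fderiv ?_
  ext v
  simp
  ring

lemma differentiableAt_comp (n : ℕ) (m i : Fin n) (a : ℕ) (d : ℂ) (x : Fin n → ℂ) :
    DifferentiableAt ℂ (comp n m i a d) x := (hasFDerivAt_comp n m i a d x).differentiableAt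

lemma fderiv_comp_apply (n : ℕ) (m i : Fin n) (a : ℕ) (d : ℂ) (x v : Fin n → ℂ) :
    fderiv ℂ (comp n m i a d) x v =
      v m * u n x ^ a * (x i - d * u n x)
      + x m * ((a : ℂ) * u n x ^ (a - 1) * ∑ j, v j) * (x i - d * u n x)
      + x m * u n x ^ a * (v i - d * ∑ j, v j) := by
  rw [(hasFDerivAt_comp n m i a d x).fderiv]
  simp
  ring

noncomputable def Tl (n : ℕ) (x : Fin n → ℂ) : ℂ := ∑ j : Fin n, (j.val : ℂ) * x j

noncomputable def LTl (n : ℕ) : (Fin n → ℂ) →L[ℂ] ℂ := ∑ j : Fin n, (j.val : ℂ) • Lproj n j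

@[simp] lemma LTl_apply (n : ℕ) (v : Fin n → ℂ) : LTl n v = ∑ j : Fin n, (j.val : ℂ) * v j := by
  simp [LTl]

lemma hasFDerivAt_Tl (n : ℕ) (x : Fin n → ℂ) : HasFDerivAt (Tl n) (LTl n) x := by
  have : HasFDerivAt (fun x : Fin n → ℂ => ∑ j : Fin n, (j.val : ℂ) * x j)
      (∑ j : Fin n, ((j : ℕ) : ℂ) • Lproj n j) x :=
    HasFDerivAt.fun_sum (fun j _ => (hasFDerivAt_Lproj n j x).const_mul _)
  exact this

/-- the ladder field in (u,T)-form. -/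
noncomputable def F (n : ℕ) : (Fin n → ℂ) → Fin n → ℂ :=
  fun x i => x i * ((((i : ℕ) : ℂ) + 1) * u n x - Tl n x)

lemma hasFDerivAt_F (n : ℕ) (i : Fin n) (x : Fin n → ℂ) :
    HasFDerivAt (fun x => F n x i)
      (((((i : ℕ) : ℂ) + 1) * u n x - Tl n x) • Lproj n i
        + (x i) • ((((i : ℕ) : ℂ) + 1) • Lsum n - LTl n)) x := by
  have h1 := hasFDerivAt_Lproj n i x
  have h2 : HasFDerivAt (fun x => (((i : ℕ) : ℂ) + 1) * u n x - Tl n x)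
      ((((i : ℕ) : ℂ) + 1) • Lsum n - LTl n) x :=
    ((hasFDerivAt_u n x).const_mul _).sub (hasFDerivAt_Tl n x)
  have h := h1.mul h2
  refine h.congr_fderiv ?_
  ext v
  simp
  ring

lemma differentiableAt_F (n : ℕ) (i : Fin n) (x : Fin n → ℂ) :
    DifferentiableAt ℂ (fun x => F n x i) x := (hasFDerivAt_F n i x).differentiableAt

lemma fderiv_F_apply (n : ℕ) (i : Fin n) (x v : Fin n → ℂ) :
    fderiv ℂ (fun x => F n x i) x v =
      v i * ((((i : ℕ) : ℂ) + 1) * u n x - Tl n x)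
      + x i * ((((i : ℕ) : ℂ) + 1) * (∑ j, v j) - ∑ j : Fin n, (j.val : ℂ) * v j) := by
  rw [(hasFDerivAt_F n i x).fderiv]
  simp
  ring

/-- componentwise fderiv application -/
lemma fderiv_pi_apply {n : ℕ} (W : (Fin n → ℂ) → Fin n → ℂ) (x : Fin n → ℂ)
    (h : ∀ i, DifferentiableAt ℂ (fun x => W x i) x) (v : Fin n → ℂ) (i : Fin n) :
    fderiv ℂ W x v i = fderiv ℂ (fun x => W x i) x v := by
  have : W = fun x i => W x i := rfl
  rw [show fderiv ℂ W x = ContinuousLinearMap.pi (fun i => fderiv ℂ (fun x => W x i) x) from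
    fderiv_pi h]
  rfl

lemma Y_eq (n : ℕ) (hl : n - 1 < n) (m : Fin n) (hm : m.val + 1 < n) (x : Fin n → ℂ)
    (i : Fin n) :
    Y n ⟨n - 1, hl⟩ m x i
      = comp n m i (n - 2 - m.val) (if i = (⟨n - 1, hl⟩ : Fin n) then 1 else 0) x := by
  simp only [Y, comp]
  have h1 : (((⟨n - 1, hl⟩ : Fin n) : ℕ) : ℤ) - (m : ℤ) - 1 = ((n - 2 - m.val : ℕ) : ℤ) := by
    push_cast; omega
  rw [h1, zpow_natCast]
  congr 1
  split <;> ring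

lemma sum_comp (n : ℕ) (l m : Fin n) (a : ℕ) (x : Fin n → ℂ) :
    ∑ j : Fin n, comp n m j a (if j = l then 1 else 0) x = 0 := by
  have h : ∑ j : Fin n, (x j - (if j = l then (1:ℂ) else 0) * u n x) = 0 := by
    rw [Finset.sum_sub_distrib]
    simp [u, Finset.sum_ite_eq']
  calc ∑ j : Fin n, comp n m j a (if j = l then 1 else 0) x
      = (x m * u n x ^ a) * ∑ j : Fin n, (x j - (if j = l then (1:ℂ) else 0) * u n x) := by
        rw [Finset.mul_sum]; rfl
    _ = 0 := by rw [h, mul_zero]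

lemma sum_j_comp (n : ℕ) (l m : Fin n) (a : ℕ) (x : Fin n → ℂ) :
    ∑ j : Fin n, (j.val : ℂ) * comp n m j a (if j = l then 1 else 0) x
      = x m * u n x ^ a * (Tl n x - (l.val : ℂ) * u n x) := by
  have h : ∑ j : Fin n, ((j.val : ℂ) * x j - (j.val : ℂ) * ((if j = l then (1:ℂ) else 0) * u n x))
      = Tl n x - (l.val : ℂ) * u n x := by
    rw [Finset.sum_sub_distrib]
    congr 1
    have : ∀ j : Fin n, (j.val : ℂ) * ((if j = l then (1:ℂ) else 0) * u n x)
        = if j = l then (l.val : ℂ) * u n x else 0 := by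
      intro j
      by_cases hj : j = l
      · subst hj; simp
      · simp [hj]
    rw [Finset.sum_congr rfl fun j _ => this j]
    simp [Finset.sum_ite_eq']
  calc ∑ j : Fin n, (j.val : ℂ) * comp n m j a (if j = l then 1 else 0) x
      = (x m * u n x ^ a) *
          ∑ j : Fin n, ((j.val : ℂ) * x j - (j.val : ℂ) * ((if j = l then (1:ℂ) else 0) * u n x)) := by
        rw [Finset.mul_sum]; simp only [comp]; congr 1; funext j; ring
    _ = _ := by rw [h]

lemma sum_F (n : ℕ) (x : Fin n → ℂ) : ∑ j : Fin n, F n x j = u n x ^ 2 := by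
  calc ∑ j : Fin n, F n x j
      = ∑ j : Fin n, (((j.val : ℂ) * x j) * u n x + x j * u n x - x j * Tl n x) :=
        Finset.sum_congr rfl (by intro j _; simp only [F]; ring)
    _ = (∑ j : Fin n, (j.val : ℂ) * x j) * u n x + (∑ j : Fin n, x j) * u n x
          - (∑ j : Fin n, x j) * Tl n x := by
        rw [Finset.sum_sub_distrib, Finset.sum_add_distrib, Finset.sum_mul, Finset.sum_mul,
          Finset.sum_mul]
    _ = u n x ^ 2 := by
        rw [show (∑ j : Fin n, (j.val : ℂ) * x j) = Tl n x from rfl,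
          show (∑ j : Fin n, x j) = u n x from rfl]; ring

lemma pow_aux (a : ℕ) (z : ℂ) : (a : ℂ) * z ^ (a - 1) * z ^ 2 = ((a : ℂ) * z ^ a) * z := by
  cases a with
  | zero => simp
  | succ b => simp [pow_succ]; ring

lemma Y_fun_eq (n : ℕ) (hl : n - 1 < n) (m : Fin n) (hm : m.val + 1 < n) (i : Fin n) :
    (fun x => Y n ⟨n - 1, hl⟩ m x i)
      = comp n m i (n - 2 - m.val) (if i = (⟨n - 1, hl⟩ : Fin n) then 1 else 0) :=
  funext fun x => Y_eq n hl m hm x i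

lemma sum_Y (n : ℕ) (hl : n - 1 < n) (m : Fin n) (hm : m.val + 1 < n) (x : Fin n → ℂ) :
    ∑ j : Fin n, Y n ⟨n - 1, hl⟩ m x j = 0 := by
  rw [Finset.sum_congr rfl fun j _ => Y_eq n hl m hm x j]
  exact sum_comp n _ m _ x

lemma sum_j_Y (n : ℕ) (hl : n - 1 < n) (m : Fin n) (hm : m.val + 1 < n) (x : Fin n → ℂ) :
    ∑ j : Fin n, (j.val : ℂ) * Y n ⟨n - 1, hl⟩ m x j
      = x m * u n x ^ (n - 2 - m.val) * (Tl n x - ((n - 1 : ℕ) : ℂ) * u n x) := by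
  rw [Finset.sum_congr rfl fun j _ => by rw [Y_eq n hl m hm x j]]
  exact sum_j_comp n _ m _ x

lemma ne_last {n : ℕ} (hl : n - 1 < n) (m : Fin n) (hm : m.val + 1 < n) :
    m ≠ (⟨n - 1, hl⟩ : Fin n) := by
  intro h
  have := congrArg Fin.val h
  simp at this
  omega

lemma bracket_YY (n : ℕ) (hl : n - 1 < n) (m m' : Fin n) (hm : m.val + 1 < n)
    (hm' : m'.val + 1 < n) (x : Fin n → ℂ) :
    lieBracket n (Y n ⟨n - 1, hl⟩ m) (Y n ⟨n - 1, hl⟩ m') x = 0 := by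
  set l : Fin n := ⟨n - 1, hl⟩ with hldef
  funext i
  simp only [lieBracket, Pi.sub_apply, Pi.zero_apply]
  rw [fderiv_pi_apply _ x (fun i => by
      rw [Y_fun_eq n hl m' hm' i]; exact differentiableAt_comp n m' i _ _ x),
    fderiv_pi_apply _ x (fun i => by
      rw [Y_fun_eq n hl m hm i]; exact differentiableAt_comp n m i _ _ x),
    Y_fun_eq n hl m' hm' i, Y_fun_eq n hl m hm i, fderiv_comp_apply, fderiv_comp_apply,
    sum_Y n hl m hm x, sum_Y n hl m' hm' x,
    Y_eq n hl m hm x m', Y_eq n hl m' hm' x m, Y_eq n hl m hm x i, Y_eq n hl m' hm' x i]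
  simp only [comp, if_neg (ne_last hl m hm), if_neg (ne_last hl m' hm')]
  ring

lemma bracket_FY (n : ℕ) (hl : n - 1 < n) (m : Fin n) (hm : m.val + 1 < n) (x : Fin n → ℂ) :
    lieBracket n (F n) (Y n ⟨n - 1, hl⟩ m) x = 0 := by
  funext i
  simp only [lieBracket, Pi.sub_apply, Pi.zero_apply]
  rw [fderiv_pi_apply _ x (fun i => by
      rw [Y_fun_eq n hl m hm i]; exact differentiableAt_comp n m i _ _ x),
    fderiv_pi_apply _ x (fun i => differentiableAt_F n i x),
    Y_fun_eq n hl m hm i, fderiv_comp_apply, fderiv_F_apply,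
    sum_F, sum_Y n hl m hm x, sum_j_Y n hl m hm x, Y_eq n hl m hm x i]
  have ha : ((n - 2 - m.val : ℕ) : ℂ) = (n : ℂ) - 2 - (m.val : ℂ) := by
    rw [show n - 2 - m.val = n - (2 + m.val) from by omega, Nat.cast_sub (by omega)]
    push_cast; ring
  have hn1 : ((n - 1 : ℕ) : ℂ) = (n : ℂ) - 1 := by
    rw [Nat.cast_sub (by omega)]; push_cast; ring
  rw [pow_aux, ha, hn1]
  simp only [comp, F]
  by_cases hi : i = (⟨n - 1, hl⟩ : Fin n)
  · have hiv : (i.val : ℂ) = (n : ℂ) - 1 := by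
      rw [hi]; exact hn1
    rw [if_pos hi, hiv]; ring
  · rw [if_neg hi]; ring

lemma linIndep_Y (n : ℕ) (hl : n - 1 < n) :
    LinearIndependent ℂ
      (fun m : {m : Fin n // (m : ℕ) + 1 < n} => Y n ⟨n - 1, hl⟩ m.1) := by
  rw [Fintype.linearIndependent_iff]
  intro g hg m₀
  have h := congrFun (congrFun hg (Pi.single m₀.1 (1 : ℂ))) m₀.1
  have hu1 : u n (Pi.single m₀.1 (1 : ℂ)) = 1 := by
    simp [u, Finset.sum_pi_single']
  rw [Finset.sum_apply, Finset.sum_apply] at h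
  have hterm : ∀ m : {m : Fin n // (m : ℕ) + 1 < n},
      (g m • Y n ⟨n - 1, hl⟩ m.1) (Pi.single m₀.1 (1 : ℂ)) m₀.1
        = g m * (Pi.single m₀.1 (1 : ℂ) : Fin n → ℂ) m.1 := by
    intro m
    simp only [Pi.smul_apply, smul_eq_mul, Y, hu1, one_zpow,
      if_neg (ne_last hl m₀.1 m₀.2), Pi.single_eq_same]
    ring
  rw [Finset.sum_congr rfl fun m _ => hterm m] at h
  rw [Finset.sum_eq_single m₀ (fun m _ hne => by
      rw [Pi.single_eq_of_ne (fun hc => hne (Subtype.ext hc)), mul_zero])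
    (fun hc => absurd (Finset.mem_univ m₀) hc)] at h
  simpa using h

lemma card_index (n : ℕ) (hn : 1 ≤ n) :
    Fintype.card {m : Fin n // (m : ℕ) + 1 < n} = n - 1 := by
  have e : {m : Fin n // (m : ℕ) + 1 < n} ≃ Fin (n - 1) :=
    { toFun := fun m => ⟨m.1.1, by have := m.2; omega⟩
      invFun := fun j => ⟨⟨j.1, by have := j.isLt; omega⟩, by have := j.isLt; simp; omega⟩
      left_inv := fun m => Subtype.ext (Fin.ext rfl)
      right_inv := fun j => Fin.ext rfl }
  rw [Fintype.card_congr e, Fintype.card_fin]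

/-- the vector fields `Y^n_1, …, Y^n_{n-1}` (those with upper index `n`,
i.e. the last index, and lower index `m < n`) have polynomial components
`x_m * u(x)^(n-m-1) * (x_i - δ_{i,n} u(x))` (natural-number power), they pairwise commute
everywhere on `ℂⁿ`, they are Lie symmetries of the ladder system, and they span an
`(n-1)`-dimensional (Abelian) Lie algebra. -/
theorem stmt_7 (n : ℕ) (hn : 1 ≤ n)
    (f : (Fin n → ℂ) → Fin n → ℂ)
    (hf : ∀ x i, f x i = x i * ∑ j : Fin n, (((i : ℤ) - (j : ℤ) + 1 : ℤ) : ℂ) * x j) :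
    (∀ m : Fin n, (m : ℕ) + 1 < n → ∀ x : Fin n → ℂ, ∀ i : Fin n,
      Y n ⟨n - 1, by omega⟩ m x i =
        x m * u n x ^ (n - 1 - (m : ℕ) - 1) *
          (x i - if i = (⟨n - 1, by omega⟩ : Fin n) then u n x else 0)) ∧
    (∀ m m' : Fin n, (m : ℕ) + 1 < n → (m' : ℕ) + 1 < n → ∀ x : Fin n → ℂ,
      lieBracket n (Y n ⟨n - 1, by omega⟩ m) (Y n ⟨n - 1, by omega⟩ m') x = 0) ∧
    (∀ m : Fin n, (m : ℕ) + 1 < n → ∀ x : Fin n → ℂ, u n x ≠ 0 →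
      lieBracket n f (Y n ⟨n - 1, by omega⟩ m) x = 0) ∧
    Module.finrank ℂ (Submodule.span ℂ (Set.range
      fun m : {m : Fin n // (m : ℕ) + 1 < n} => Y n ⟨n - 1, by omega⟩ m.1)) = n - 1 := by
  have hl : n - 1 < n := by omega
  refine ⟨?_, ?_, ?_, ?_⟩
  · intro m hm x i
    rw [Y_eq n hl m hm x i]
    simp only [comp]
    rw [show n - 1 - (m : ℕ) - 1 = n - 2 - (m : ℕ) from by omega]
    congr 1
    split_ifs <;> ring
  · intro m m' hm hm' x
    exact bracket_YY n hl m m' hm hm' x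
  · intro m hm x _
    have hs : ∀ x : Fin n → ℂ, ∀ i : Fin n,
        ∑ j : Fin n, (((i : ℤ) - (j : ℤ) + 1 : ℤ) : ℂ) * x j
          = ((i.val : ℂ) + 1) * u n x - Tl n x := by
      intro x i
      calc ∑ j : Fin n, (((i : ℤ) - (j : ℤ) + 1 : ℤ) : ℂ) * x j
          = ∑ j : Fin n, (((i.val : ℂ) + 1) * x j - (j.val : ℂ) * x j) :=
            Finset.sum_congr rfl (by intro j _; push_cast; ring)
        _ = ((i.val : ℂ) + 1) * (∑ j : Fin n, x j) - ∑ j : Fin n, (j.val : ℂ) * x j := by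
            rw [Finset.sum_sub_distrib, Finset.mul_sum]
        _ = _ := rfl
    have hfF : f = F n := by
      funext x i
      rw [hf x i, hs x i]
      rfl
    rw [hfF]
    exact bracket_FY n hl m hm x
  · rw [finrank_span_eq_card (linIndep_Y n hl), card_index n hn]
end

section
/- Fix an integer n ≥ 1. The diagonal vector fields pairwise commute: for all 1 ≤ l, m ≤ n, [Y^l_l, Y^m_m](x) = 0 for every x ∈ ℂⁿ with u(x) ≠ 0. Hence the (n−1)-dimensional linear space L' spanned by Y^1_1, …, Y^n_n is an Abelian Lie algebra. -/
noncomputable def Sl (n : ℕ) : (Fin n → ℂ) →L[ℂ] ℂ := ∑ j, ContinuousLinearMap.proj j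

lemma Sl_apply (n : ℕ) (v : Fin n → ℂ) : Sl n v = ∑ j, v j := by simp [Sl]

noncomputable def P (n : ℕ) (l : Fin n) : (Fin n → ℂ) →L[ℂ] ℂ := ContinuousLinearMap.proj l

lemma P_apply (n : ℕ) (l : Fin n) (v : Fin n → ℂ) : P n l v = v l := rfl

lemma u_eq (n : ℕ) : u n = ⇑(Sl n) := by funext y; simp [u, Sl_apply]

lemma Y_apply (n : ℕ) (l : Fin n) (x : Fin n → ℂ) (i : Fin n) :
    Y n l l x i = x l * (u n x)⁻¹ * (x i - if i = l then u n x else 0) := by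
  have : ((l : ℤ) - (l : ℤ) - 1) = -1 := by ring
  rw [Y, this, zpow_neg_one]

lemma Y_eq_G (n : ℕ) (l : Fin n) (y : Fin n → ℂ) (hy : u n y ≠ 0) :
    Y n l l y = (y l * (u n y)⁻¹) • y - y l • (Pi.single l 1 : Fin n → ℂ) := by
  funext i
  simp only [Y_apply, Pi.sub_apply, Pi.smul_apply, Pi.single_apply, smul_eq_mul]
  by_cases h : i = l
  · subst h; rw [if_pos rfl, if_pos rfl]; field_simp
  · rw [if_neg h, if_neg h]; ring

noncomputable def D (n : ℕ) (l : Fin n) (x : Fin n → ℂ) : (Fin n → ℂ) →L[ℂ] (Fin n → ℂ) :=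
  ((x l * (u n x)⁻¹) • ContinuousLinearMap.id ℂ (Fin n → ℂ)
    + (x l • ((-(ContinuousLinearMap.mulLeftRight ℂ ℂ (u n x)⁻¹ (u n x)⁻¹)).comp (Sl n))
        + (u n x)⁻¹ • P n l).smulRight x)
  - (x l • (0 : (Fin n → ℂ) →L[ℂ] (Fin n → ℂ))
      + (P n l).smulRight (Pi.single l 1))

lemma hasFDerivAt_Y (n : ℕ) (l : Fin n) (x : Fin n → ℂ) (hx : u n x ≠ 0) :
    HasFDerivAt (Y n l l) (D n l x) x := by
  have hu : HasFDerivAt (u n) (Sl n) x := by rw [u_eq]; exact (Sl n).hasFDerivAt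
  have hinv : HasFDerivAt (fun y => (u n y)⁻¹)
      ((-(ContinuousLinearMap.mulLeftRight ℂ ℂ (u n x)⁻¹ (u n x)⁻¹)).comp (Sl n)) x :=
    (hasFDerivAt_inv' hx).comp x hu
  have hproj : HasFDerivAt (fun y : Fin n → ℂ => y l) (P n l) x := (P n l).hasFDerivAt
  have hc := hproj.mul hinv
  have hmain := hc.smul (hasFDerivAt_id x)
  have hsingle := hproj.smul (hasFDerivAt_const (Pi.single l 1 : Fin n → ℂ) x)
  have hG := hmain.sub hsingle
  have hev : Y n l l =ᶠ[nhds x] fun y => (y l * (u n y)⁻¹) • y - y l • (Pi.single l 1 : Fin n → ℂ) := by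
    have hucont : Continuous (u n) := by rw [u_eq]; exact (Sl n).continuous
    have hopen : IsOpen {y : Fin n → ℂ | u n y ≠ 0} :=
      isOpen_compl_singleton.preimage hucont
    exact Filter.eventuallyEq_of_mem (hopen.mem_nhds hx) (fun y hy => Y_eq_G n l y hy)
  exact (hG.congr_of_eventuallyEq hev)

lemma fderiv_Y_apply (n : ℕ) (l : Fin n) (x v : Fin n → ℂ) (hx : u n x ≠ 0) (i : Fin n) :
    fderiv ℂ (Y n l l) x v i =
      x l * (u n x)⁻¹ * v i
      + ((u n x)⁻¹ * v l - x l * (u n x)⁻¹ * (u n x)⁻¹ * (∑ j, v j)) * x i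
      - (if i = l then v l else 0) := by
  rw [(hasFDerivAt_Y n l x hx).fderiv]
  simp only [D, ContinuousLinearMap.sub_apply, ContinuousLinearMap.add_apply,
    ContinuousLinearMap.smul_apply, ContinuousLinearMap.smulRight_apply,
    ContinuousLinearMap.id_apply, P_apply,
    ContinuousLinearMap.comp_apply, ContinuousLinearMap.neg_apply,
    ContinuousLinearMap.mulLeftRight_apply, ContinuousLinearMap.zero_apply, Sl_apply,
    Pi.sub_apply, Pi.add_apply, Pi.smul_apply, Pi.single_apply, smul_eq_mul, Pi.zero_apply]
  by_cases h : i = l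
  · simp only [if_pos h]; ring
  · simp only [if_neg h]; ring

lemma sum_Y_s8 (n : ℕ) (l : Fin n) (x : Fin n → ℂ) (hx : u n x ≠ 0) :
    ∑ j, Y n l l x j = 0 := by
  have h1 : ∑ j, Y n l l x j
      = x l * (u n x)⁻¹ * ∑ j, (x j - if j = l then u n x else 0) := by
    rw [Finset.mul_sum]
    exact Finset.sum_congr rfl fun j _ => Y_apply n l x j
  rw [h1, Finset.sum_sub_distrib]
  have h2 : ∑ j, (if j = l then u n x else 0) = u n x := by
    simp
  rw [h2, show (∑ j, x j) = u n x from rfl, sub_self, mul_zero]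

set_option maxHeartbeats 2000000 in
lemma bracket_zero (n : ℕ) (l m : Fin n) (x : Fin n → ℂ) (hx : u n x ≠ 0) :
    fderiv ℂ (Y n m m) x (Y n l l x) - fderiv ℂ (Y n l l) x (Y n m m x) = 0 := by
  funext i
  simp only [Pi.sub_apply, Pi.zero_apply]
  rw [fderiv_Y_apply n m x _ hx i, fderiv_Y_apply n l x _ hx i, sum_Y_s8 n l x hx, sum_Y_s8 n m x hx]
  simp only [Y_apply]
  by_cases hlm : l = m
  · subst hlm; ring
  · have hml : ¬ m = l := fun h => hlm h.symm
    by_cases hil : i = l <;> by_cases him : i = m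
    · exact absurd (hil.symm.trans him) hlm
    · have hmi : ¬ m = i := fun h => him h.symm
      subst hil
      simp only [if_pos rfl, if_neg him, if_neg hmi, if_neg hlm, if_neg hml, if_true]
      field_simp; ring
    · have hli : ¬ l = i := fun h => hil h.symm
      subst him
      simp only [if_pos rfl, if_neg hil, if_neg hli, if_neg hlm, if_neg hml, if_true]
      field_simp; ring
    · simp only [if_neg hil, if_neg him, if_neg hlm, if_neg hml]
      field_simp; ring

lemma sum_Y_left (n : ℕ) (x : Fin n → ℂ) (hx : u n x ≠ 0) (i : Fin n) :
    ∑ l, Y n l l x i = 0 := by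
  have h1 : ∀ l : Fin n, Y n l l x i
      = (u n x)⁻¹ * x i * x l - (if i = l then x l * (u n x)⁻¹ * u n x else 0) := by
    intro l
    rw [Y_apply]
    by_cases h : i = l
    · simp only [if_pos h]; ring
    · simp only [if_neg h]; ring
  simp only [h1]
  rw [Finset.sum_sub_distrib, ← Finset.mul_sum, Finset.sum_ite_eq]
  simp only [Finset.mem_univ, if_true]
  show (u n x)⁻¹ * x i * u n x - x i * (u n x)⁻¹ * u n x = 0
  field_simp; ring

section Part2
variable (n : ℕ)

noncomputable def gY : Fin n → ({x : Fin n → ℂ // u n x ≠ 0} → (Fin n → ℂ)) :=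
  fun l : Fin n => fun x : {x : Fin n → ℂ // u n x ≠ 0} => Y n l l x.1

noncomputable def T : (Fin n → ℂ) →ₗ[ℂ] ({x : Fin n → ℂ // u n x ≠ 0} → (Fin n → ℂ)) :=
  Fintype.linearCombination ℂ (gY n)

lemma span_eq_range : Submodule.span ℂ (Set.range (gY n)) = LinearMap.range (T n) := by
  apply le_antisymm
  · rw [Submodule.span_le]
    rintro _ ⟨l, rfl⟩
    exact ⟨Pi.single l 1, by simp [T, Fintype.linearCombination_apply_single]⟩
  · rintro _ ⟨c, rfl⟩
    rw [T, Fintype.linearCombination_apply]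
    exact Submodule.sum_mem _ fun l _ => Submodule.smul_mem _ _ (Submodule.subset_span ⟨l, rfl⟩)

lemma ker_T (hn : 1 ≤ n) :
    LinearMap.ker (T n) = Submodule.span ℂ {(fun _ => 1 : Fin n → ℂ)} := by
  apply le_antisymm
  · intro c hc
    rw [LinearMap.mem_ker] at hc
    have key : ∀ j k : Fin n, j ≠ k → c j = c k := by
      intro j k hjk
      set x : Fin n → ℂ := Pi.single k 1 + Pi.single j 1 with hxdef
      have hux : u n x = 2 := by
        simp only [u, hxdef, Pi.add_apply, Pi.single_apply, Finset.sum_add_distrib,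
          Finset.sum_ite_eq', Finset.mem_univ, if_true]
        norm_num
      have hx2 : u n x ≠ 0 := by rw [hux]; norm_num
      have h0 := congrFun (congrFun hc ⟨x, hx2⟩) j
      simp only [T, Fintype.linearCombination_apply, Finset.sum_apply, Pi.smul_apply, gY,
        smul_eq_mul, Pi.zero_apply, Y_apply] at h0
      have hxj : x j = 1 := by
        simp [hxdef, Pi.single_apply, hjk]
      have hterm : ∀ l : Fin n, c l * (x l * (u n x)⁻¹ * (x j - if j = l then u n x else 0))
          = (if l = k then c k * 2⁻¹ else 0) + (if l = j then -(c j * 2⁻¹) else 0) := by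
        intro l
        by_cases h1 : l = k
        · subst h1
          have hxl : x l = 1 := by simp [hxdef, Pi.single_apply, (Ne.symm hjk : ¬ l = j)]
          rw [hxl, hux, hxj, if_neg (fun h : j = l => hjk h), if_pos rfl,
            if_neg (Ne.symm hjk : ¬ l = j)]
          ring
        · by_cases h2 : l = j
          · subst h2
            rw [hxj, hux, if_pos rfl, if_neg h1, if_pos rfl]
            ring
          · have hxl : x l = 0 := by
              simp [hxdef, Pi.single_apply, h1, h2]
            rw [hxl, if_neg h1, if_neg h2]
            ring
      rw [Finset.sum_congr rfl (fun l _ => hterm l), Finset.sum_add_distrib,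
        Finset.sum_ite_eq', Finset.sum_ite_eq'] at h0
      simp only [Finset.mem_univ, if_true] at h0
      field_simp at h0
      linear_combination -h0
    rw [Submodule.mem_span_singleton]
    refine ⟨c ⟨0, hn⟩, funext fun j => ?_⟩
    simp only [Pi.smul_apply, smul_eq_mul, mul_one]
    by_cases h : j = ⟨0, hn⟩
    · rw [h]
    · exact (key j ⟨0, hn⟩ h).symm
  · rw [Submodule.span_le, Set.singleton_subset_iff]
    rw [SetLike.mem_coe, LinearMap.mem_ker, T, Fintype.linearCombination_apply]
    funext x i
    simp only [Finset.sum_apply, Pi.smul_apply, gY, one_smul, Pi.zero_apply]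
    exact sum_Y_left n x.1 x.2 i

end Part2

/-- the diagonal vector fields pairwise commute on `{u ≠ 0}`, and the linear
space `L'` they span (as vector fields on `{x : u(x) ≠ 0}`) has dimension `n - 1`;
hence `L'` is an `(n-1)`-dimensional Abelian Lie algebra. -/
theorem stmt_8 (n : ℕ) (hn : 1 ≤ n) :
    (∀ l m : Fin n, ∀ x : Fin n → ℂ, u n x ≠ 0 →
      lieBracket n (Y n l l) (Y n m m) x = 0) ∧
    Module.finrank ℂ (Submodule.span ℂ (Set.range
      fun l : Fin n => fun x : {x : Fin n → ℂ // u n x ≠ 0} => Y n l l x.1)) = n - 1 := by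
  constructor
  · intro l m x hx
    exact bracket_zero n l m x hx
  · have hrange : (Set.range fun l : Fin n =>
        fun x : {x : Fin n → ℂ // u n x ≠ 0} => Y n l l x.1) = Set.range (gY n) := rfl
    rw [hrange, span_eq_range n]
    have hone : (fun _ => 1 : Fin n → ℂ) ≠ 0 := by
      intro h
      have := congrFun h ⟨0, hn⟩
      simp at this
    have hker : Module.finrank ℂ (LinearMap.ker (T n)) = 1 := by
      rw [ker_T n hn]
      exact finrank_span_singleton hone
    have hrn := LinearMap.finrank_range_add_finrank_ker (T n)
    rw [hker, Module.finrank_fin_fun] at hrn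
    omega
end

section
/- Fix an integer n ≥ 1 and complex constants α_0, α_1, …, α_n. Then for every x ∈ ℂⁿ with u(x) ≠ 0 and every index 1 ≤ i ≤ n, one has α_0 · u(x) · x_i − u(x) · Σ_{m=1}^n α_m · Y^m_m(x)_i = Σ_{j=1}^n (α_0 + α_i − α_j) · x_i · x_j. That is, the vector field α_0 u D − u Σ_m α_m Y^m_m coincides with the homogeneous Lotka–Volterra vector field with coefficients a_{ij} = α_0 + α_i − α_j (the generalized ladder system), and this identity extends polynomially to all of ℂⁿ. -/
/-- the vector field `α₀ u D - u ∑_m α_m Y^m_m` coincides, wherever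
`u(x) ≠ 0`, with the homogeneous Lotka–Volterra vector field with coefficients
`a_{ij} = α₀ + α_i - α_j` (the generalized ladder system). -/
theorem stmt_10 (n : ℕ) (hn : 1 ≤ n) (α₀ : ℂ) (α : Fin n → ℂ) :
    ∀ x : Fin n → ℂ, u n x ≠ 0 → ∀ i : Fin n,
      α₀ * u n x * x i - u n x * ∑ m : Fin n, α m * Y n m m x i =
        ∑ j : Fin n, (α₀ + α i - α j) * x i * x j := by
  intro x hu i
  have key : u n x * ∑ m : Fin n, α m * Y n m m x i
      = (∑ m : Fin n, α m * x m * x i) - α i * x i * u n x := by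
    rw [Finset.mul_sum]
    have step : ∀ m : Fin n, u n x * (α m * Y n m m x i)
        = α m * x m * x i - (if i = m then α m * x m * u n x else 0) := by
      intro m
      have hz : ((m : ℤ) - (m : ℤ) - 1) = -1 := by ring
      simp only [Y, hz, zpow_neg_one]
      by_cases h : i = m <;> simp [h] <;> field_simp <;> ring
    rw [Finset.sum_congr rfl fun m _ => step m, Finset.sum_sub_distrib]
    congr 1
    simp [Finset.sum_ite_eq]
  rw [key]
  have rhs : ∑ j : Fin n, (α₀ + α i - α j) * x i * x j
      = α₀ * u n x * x i + α i * x i * u n x - ∑ m : Fin n, α m * x m * x i := by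
    simp only [u, Finset.mul_sum, Finset.sum_mul, ← Finset.sum_sub_distrib,
      ← Finset.sum_add_distrib]
    exact Finset.sum_congr rfl fun j _ => by ring
  rw [rhs]; ring
end

section
/- Fix an integer n ≥ 1 and complex constants α_0, α_1, …, α_n, and let f : ℂⁿ → ℂⁿ be the generalized ladder vector field f(x)_i = x_i · Σ_{j=1}^n (α_0 + α_i − α_j) x_j. Then for every 1 ≤ l ≤ n, the diagonal vector field Y^l_l is a Lie symmetry of the generalized ladder system: [f, Y^l_l](x) = 0 for every x ∈ ℂⁿ with u(x) ≠ 0. Hence the generalized ladder system possesses the (n−1)-dimensional Abelian Lie algebra of Lie symmetries spanned by Y^1_1, …, Y^n_n. -/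
set_option maxHeartbeats 1000000 in
open ContinuousLinearMap in
/-- each diagonal field `Y^l_l` is a Lie symmetry of the generalized ladder
system `f(x)_i = x_i ∑_j (α₀ + α_i - α_j) x_j` on the set where `u(x) ≠ 0`. -/
theorem stmt_11 (n : ℕ) (hn : 1 ≤ n) (α₀ : ℂ) (α : Fin n → ℂ)
    (f : (Fin n → ℂ) → Fin n → ℂ)
    (hf : ∀ x i, f x i = x i * ∑ j : Fin n, (α₀ + α i - α j) * x j) :
    ∀ l : Fin n, ∀ x : Fin n → ℂ, u n x ≠ 0 →
      lieBracket n f (Y n l l) x = 0 := by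
  intro l x hx
  classical
  set P : Fin n → ((Fin n → ℂ) →L[ℂ] ℂ) := fun i => ContinuousLinearMap.proj i with hPdef
  have hP : ∀ (i : Fin n) (v : Fin n → ℂ), P i v = v i := fun i v => rfl
  set U : (Fin n → ℂ) →L[ℂ] ℂ := ∑ j, P j with hUdef
  have hU : ∀ v : Fin n → ℂ, U v = u n v := by
    intro v; simp [hUdef, u, ContinuousLinearMap.sum_apply, hP]
  set S : Fin n → ((Fin n → ℂ) →L[ℂ] ℂ) := fun i => ∑ j, (α₀ + α i - α j) • P j with hSdef
  have hS : ∀ (i : Fin n) (v : Fin n → ℂ), S i v = ∑ j, (α₀ + α i - α j) * v j := by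
    intro i v; simp [hSdef, ContinuousLinearMap.sum_apply, hP]
  set E : Fin n → ((Fin n → ℂ) →L[ℂ] ℂ) :=
    fun i => P i - (if i = l then (1:ℂ) else 0) • U with hEdef
  have hE : ∀ (i : Fin n) (v : Fin n → ℂ),
      E i v = v i - (if i = l then (1:ℂ) else 0) * u n v := by
    intro i v; by_cases h : i = l <;> simp [hEdef, hP, hU, h]
  -- u is linear
  have hu' : HasFDerivAt (u n) U x := by
    have e : (u n) = ⇑U := funext fun v => (hU v).symm
    rw [e]; exact U.hasFDerivAt
  -- derivative of f components
  have hfd : ∀ i : Fin n, HasFDerivAt (fun y => f y i)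
      ((x i) • S i + (∑ j, (α₀ + α i - α j) * x j) • P i) x := by
    intro i
    have h1 : HasFDerivAt (fun y : Fin n → ℂ => y i) (P i) x := hasFDerivAt_apply i x
    have h2 : HasFDerivAt (fun y : Fin n → ℂ => ∑ j, (α₀ + α i - α j) * y j) (S i) x := by
      have e : (fun y : Fin n → ℂ => ∑ j, (α₀ + α i - α j) * y j) = ⇑(S i) :=
        funext fun v => (hS i v).symm
      rw [e]; exact (S i).hasFDerivAt
    have h3 := h1.mul h2
    have e : (fun y => f y i) = fun y : Fin n → ℂ => y i * ∑ j, (α₀ + α i - α j) * y j :=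
      funext fun y => hf y i
    rw [e]; exact h3
  -- Y in inverse form
  have hY : Y n l l = fun y i => y l * (u n y)⁻¹ * (y i - if i = l then u n y else 0) := by
    funext y i
    rw [Y, sub_self, zero_sub, zpow_neg, zpow_one]
  have hYval : ∀ i : Fin n,
      Y n l l x i = x l * (u n x)⁻¹ * (x i - if i = l then u n x else 0) := by
    intro i; rw [hY]
  -- derivative of inverse of u
  have hinv : HasFDerivAt (fun y : Fin n → ℂ => (u n y)⁻¹) ((-(u n x ^ 2)⁻¹) • U) x := by
    have h := (hasFDerivAt_inv hx).comp x hu'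
    refine h.congr_fderiv ?_
    ext v
    simp [ContinuousLinearMap.comp_apply, ContinuousLinearMap.smulRight_apply, ContinuousLinearMap.toSpanSingleton_apply, mul_comm]
  have hc12 : HasFDerivAt (fun y : Fin n → ℂ => y l * (u n y)⁻¹)
      ((x l) • ((-(u n x ^ 2)⁻¹) • U) + (u n x)⁻¹ • P l) x :=
    (hasFDerivAt_apply l x).mul hinv
  have hc3 : ∀ i : Fin n,
      HasFDerivAt (fun y : Fin n → ℂ => y i - if i = l then u n y else 0) (E i) x := by
    intro i
    have e : (fun y : Fin n → ℂ => y i - if i = l then u n y else 0) = ⇑(E i) := by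
      funext v
      by_cases h : i = l <;> simp [hE, h]
    rw [e]; exact (E i).hasFDerivAt
  have hYd : ∀ i : Fin n, HasFDerivAt (fun y => Y n l l y i)
      ((x l * (u n x)⁻¹) • E i + (x i - if i = l then u n x else 0) •
        ((x l) • ((-(u n x ^ 2)⁻¹) • U) + (u n x)⁻¹ • P l)) x := by
    intro i
    have h3 := hc12.mul (hc3 i)
    have e : (fun y => Y n l l y i)
        = fun y : Fin n → ℂ => (y l * (u n y)⁻¹) * (y i - if i = l then u n y else 0) := by
      funext y; rw [hY]
    rw [e]; exact h3
  -- full derivatives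
  have hfF : HasFDerivAt f (ContinuousLinearMap.pi fun i =>
      (x i) • S i + (∑ j, (α₀ + α i - α j) * x j) • P i) x :=
    hasFDerivAt_pi.2 hfd
  have hYF : HasFDerivAt (Y n l l) (ContinuousLinearMap.pi fun i =>
      (x l * (u n x)⁻¹) • E i + (x i - if i = l then u n x else 0) •
        ((x l) • ((-(u n x ^ 2)⁻¹) • U) + (u n x)⁻¹ • P l)) x :=
    hasFDerivAt_pi.2 hYd
  have hb : lieBracket n f (Y n l l) x =
      (ContinuousLinearMap.pi fun i =>
        (x l * (u n x)⁻¹) • E i + (x i - if i = l then u n x else 0) •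
          ((x l) • ((-(u n x ^ 2)⁻¹) • U) + (u n x)⁻¹ • P l)) (f x)
      - (ContinuousLinearMap.pi fun i =>
        (x i) • S i + (∑ j, (α₀ + α i - α j) * x j) • P i) (Y n l l x) := by
    rw [lieBracket, hYF.fderiv, hfF.fderiv]
  -- algebraic key facts
  have e1 : ∀ i : Fin n,
      (∑ j, (α₀ + α i - α j) * x j) = (α₀ + α i) * u n x - (∑ j, α j * x j) := by
    intro i
    rw [u, Finset.mul_sum, ← Finset.sum_sub_distrib]
    exact Finset.sum_congr rfl fun j _ => by ring
  have hufx : u n (f x) = α₀ * (u n x * u n x) := by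
    have h1 : u n (f x)
        = ∑ j, (α₀ * (x j * u n x) + (α j * x j) * u n x - x j * (∑ k, α k * x k)) := by
      rw [u]
      exact Finset.sum_congr rfl fun j _ => by rw [hf, e1]; ring
    rw [h1]
    simp only [Finset.sum_sub_distrib, Finset.sum_add_distrib, ← Finset.mul_sum, ← Finset.sum_mul]
    rw [show (∑ j, x j) = u n x from rfl]
    ring
  have hSY : ∀ i : Fin n, S i (Y n l l x) =
      x l * (u n x)⁻¹ * (∑ j, (α₀ + α i - α j) * x j) - (α₀ + α i - α l) * x l := by
    intro i
    rw [hS]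
    have h1 : ∀ j : Fin n, (α₀ + α i - α j) * Y n l l x j
        = x l * (u n x)⁻¹ * ((α₀ + α i - α j) * x j)
          - (if j = l then (α₀ + α i - α j) * (x l * ((u n x)⁻¹ * u n x)) else 0) := by
      intro j
      rw [hYval]
      by_cases h : j = l
      · rw [if_pos h, if_pos h]; ring
      · rw [if_neg h, if_neg h]; ring
    simp only [h1, Finset.sum_sub_distrib, ← Finset.mul_sum, Finset.sum_ite_eq',
      Finset.mem_univ, if_true]
    rw [inv_mul_cancel₀ hx]
    ring
  -- finish componentwise
  rw [hb]
  funext i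
  simp only [Pi.sub_apply, Pi.zero_apply, ContinuousLinearMap.pi_apply,
    ContinuousLinearMap.add_apply, ContinuousLinearMap.coe_smul', Pi.smul_apply,
    smul_eq_mul]
  rw [hSY, hE, hU, hP, hP, hYval, hufx, hf, hf]
  by_cases h : i = l
  · subst h
    rw [if_pos rfl, if_pos rfl]
    field_simp
    ring
  · simp only [if_neg h]
    have hTl : (∑ j, (α₀ + α l - α j) * x j)
        = (∑ j, (α₀ + α i - α j) * x j) + (α l - α i) * u n x := by
      rw [u, Finset.mul_sum, ← Finset.sum_add_distrib]
      exact Finset.sum_congr rfl fun j _ => by ring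
    rw [hTl]
    field_simp
    ring
end
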